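/- arXiv:1603.02542 — 2 statements merged into one kernel-verified Lean document; each statement's English description precedes it below -/
import Mathlib

section
/- Let f : [0,1] → [0,1] be a piecewise continuous interval map with no connections and no periodic points, let p ∈ [0,1] be a point whose full forward orbit {p, f(p), f²(p), …} avoids the set D of partition points, and let μ_n = (1/n) Σ_{k=0}^{n-1} δ_{f^k(p)} be the Birkhoff averages of Dirac measures. Suppose a subsequence (μ_{n_j}) converges to a Borel probability measure μ in the weak* topology. Then for every x ∈ [0,1] and every ε > 0, there exist an open subinterval J of [0,1] containing x and an integer j₀ such that μ_{n_j}(J) < ε for all j ≥ j₀. -/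
open Set Filter MeasureTheory Topology
open scoped ENNReal

/-- Data witnessing that `f` is a piecewise continuous interval map on `[0,1]`:
a partition `0 = pt 0 < pt 1 < ⋯ < pt (d+1) = 1` such that `f` is continuous on each
open subinterval and has one-sided limits `wR i` (right limit at the left endpoint)
and `wL i` (left limit at the right endpoint) on each subinterval. -/
structure PiecewiseContData (f : ℝ → ℝ) where
  d : ℕ
  pt : Fin (d + 2) → ℝ
  mono : StrictMono pt
  first : pt 0 = 0
  last : pt (Fin.last (d + 1)) = 1
  cont : ∀ i : Fin (d + 1), ContinuousOn f (Ioo (pt i.castSucc) (pt i.succ))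
  wR : Fin (d + 1) → ℝ
  wL : Fin (d + 1) → ℝ
  wR_lim : ∀ i : Fin (d + 1),
    Tendsto f (𝓝[Ioo (pt i.castSucc) (pt i.succ)] (pt i.castSucc)) (𝓝 (wR i))
  wL_lim : ∀ i : Fin (d + 1),
    Tendsto f (𝓝[Ioo (pt i.castSucc) (pt i.succ)] (pt i.succ)) (𝓝 (wL i))

/-- The set `D` of partition points. -/
def PiecewiseContData.D {f : ℝ → ℝ} (P : PiecewiseContData f) : Set ℝ :=
  Set.range P.pt

/-- The set `W` of one-sided limit values of `f` at the partition points. -/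
def PiecewiseContData.W {f : ℝ → ℝ} (P : PiecewiseContData f) : Set ℝ :=
  Set.range P.wR ∪ Set.range P.wL

/-- The no-connections condition: no forward iterate (`k ≥ 1`) of a partition point lies
in `D`, and no forward iterate (`k ≥ 0`) of a one-sided limit value lies in `D`. -/
def PiecewiseContData.NoConnections {f : ℝ → ℝ} (P : PiecewiseContData f) : Prop :=
  (∀ i : Fin (P.d + 2), ∀ k : ℕ, 1 ≤ k → f^[k] (P.pt i) ∉ P.D) ∧
  (∀ w ∈ P.W, ∀ k : ℕ, f^[k] w ∉ P.D)

/-- `f` has no periodic points in `[0,1]`. -/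
def NoPeriodicPts (f : ℝ → ℝ) : Prop :=
  ∀ x ∈ Icc (0:ℝ) 1, ∀ k : ℕ, 1 ≤ k → f^[k] x ≠ x

/-- The Birkhoff average `μ_n = (1/n) ∑_{k<n} δ_{f^k(p)}` of Dirac measures along the
orbit of `p`. -/
noncomputable def birkhoffMeasure (f : ℝ → ℝ) (p : ℝ) (n : ℕ) : Measure ℝ :=
  (n : ℝ≥0∞)⁻¹ • ∑ k ∈ Finset.range n, Measure.dirac (f^[k] p)


open scoped Classical in
noncomputable def cnt (f : ℝ → ℝ) (p : ℝ) (N : ℕ) (s : Set ℝ) : ℕ :=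
  ((Finset.range N).filter (fun k => f^[k] p ∈ s)).card

lemma cnt_mono (f : ℝ → ℝ) (p : ℝ) (N : ℕ) {s t : Set ℝ} (h : s ⊆ t) :
    cnt f p N s ≤ cnt f p N t := by
  classical
  unfold cnt
  refine Finset.card_le_card ?_
  intro k hk
  simp only [Finset.mem_filter] at *
  exact ⟨hk.1, h hk.2⟩

lemma cnt_le (f : ℝ → ℝ) (p : ℝ) (N : ℕ) (s : Set ℝ) : cnt f p N s ≤ N := by
  classical
  unfold cnt
  exact (Finset.card_le_card (Finset.filter_subset _ _)).trans (by simp)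

lemma cnt_shift (f : ℝ → ℝ) (p : ℝ) (m : ℕ) {s t : Set ℝ}
    (h : ∀ z ∈ s, f^[m] z ∈ t) (N : ℕ) :
    cnt f p N s ≤ cnt f p N t + m := by
  classical
  unfold cnt
  have hinj : Function.Injective (fun k : ℕ => m + k) := fun a b hab => by
    simpa using hab
  have hsub : ((Finset.range N).filter (fun k => f^[k] p ∈ s)).image (fun k => m + k)
      ⊆ ((Finset.range N).filter (fun k => f^[k] p ∈ t)) ∪ Finset.Ico N (N + m) := by
    intro k hk
    simp only [Finset.mem_image, Finset.mem_filter, Finset.mem_range] at hk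
    obtain ⟨k', ⟨hk'N, hk's⟩, rfl⟩ := hk
    have hmem : f^[m + k'] p ∈ t := by
      rw [Function.iterate_add_apply]; exact h _ hk's
    by_cases hlt : m + k' < N
    · exact Finset.mem_union_left _ (by simp [hlt, hmem])
    · exact Finset.mem_union_right _ (by simp only [Finset.mem_Ico]; omega)
  have h1 : ((Finset.range N).filter (fun k => f^[k] p ∈ s)).card
      = (((Finset.range N).filter (fun k => f^[k] p ∈ s)).image (fun k => m + k)).card := by
    rw [Finset.card_image_of_injective _ hinj]
  rw [h1]
  refine (Finset.card_le_card hsub).trans ?_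
  refine (Finset.card_union_le _ _).trans ?_
  simp [Nat.card_Ico]

lemma cnt_split (f : ℝ → ℝ) (p : ℝ) (N : ℕ) (q δ : ℝ) (h : ∀ k, f^[k] p ≠ q) :
    cnt f p N (Metric.ball q δ) ≤ cnt f p N (Ioo (q - δ) q) + cnt f p N (Ioo q (q + δ)) := by
  classical
  unfold cnt
  refine le_trans (Finset.card_le_card (t := _ ∪ _) ?_) (Finset.card_union_le _ _)
  intro k hk
  simp only [Finset.mem_filter, Finset.mem_range, Metric.mem_ball, Real.dist_eq] at hk
  obtain ⟨hkN, hks⟩ := hk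
  rw [abs_sub_lt_iff] at hks
  rcases lt_or_gt_of_ne (h k) with hlt | hgt
  · refine Finset.mem_union_left _ ?_
    simp only [Finset.mem_filter, Finset.mem_range, Set.mem_Ioo]
    refine ⟨hkN, by linarith [hks.2], hlt⟩
  · refine Finset.mem_union_right _ ?_
    simp only [Finset.mem_filter, Finset.mem_range, Set.mem_Ioo]
    refine ⟨hkN, hgt, by linarith [hks.1]⟩

lemma birkhoff_apply (f : ℝ → ℝ) (p : ℝ) (N : ℕ) (s : Set ℝ) (hs : MeasurableSet s) :
    birkhoffMeasure f p N s = (cnt f p N s : ℝ≥0∞) / N := by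
  classical
  unfold birkhoffMeasure cnt
  rw [Measure.smul_apply, Measure.finset_sum_apply]
  simp only [Measure.dirac_apply' _ hs, Set.indicator_apply, Pi.one_apply]
  rw [Finset.sum_boole, smul_eq_mul, ENNReal.div_eq_inv_mul]

lemma iter_mem_Icc {f : ℝ → ℝ} (hf : MapsTo f (Icc (0:ℝ) 1) (Icc (0:ℝ) 1))
    {q : ℝ} (hq : q ∈ Icc (0:ℝ) 1) (m : ℕ) : f^[m] q ∈ Icc (0:ℝ) 1 := by
  induction m with
  | zero => simpa using hq
  | succ m ih => rw [Function.iterate_succ_apply']; exact hf ih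

lemma mem_Ioo_of_not_D {f : ℝ → ℝ} (P : PiecewiseContData f) {q : ℝ}
    (hq : q ∈ Icc (0:ℝ) 1) (hD : q ∉ P.D) :
    ∃ i : Fin (P.d + 1), q ∈ Ioo (P.pt i.castSucc) (P.pt i.succ) := by
  classical
  have hne : ∀ i, P.pt i ≠ q := fun i h => hD ⟨i, h⟩
  have hS : (Finset.univ.filter (fun i : Fin (P.d + 2) => P.pt i < q)).Nonempty := by
    refine ⟨0, ?_⟩
    simp only [Finset.mem_filter, Finset.mem_univ, true_and]
    rw [P.first]
    exact lt_of_le_of_ne hq.1 (fun h => hne 0 (P.first.trans h))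
  set i0 := (Finset.univ.filter (fun i : Fin (P.d + 2) => P.pt i < q)).max' hS with hi0
  have hi0lt : P.pt i0 < q := by
    have := Finset.max'_mem _ hS
    simpa using this
  have hi0ne : i0 ≠ Fin.last (P.d + 1) := by
    intro h
    rw [h, P.last] at hi0lt
    exact absurd hq.2 (not_le.mpr hi0lt)
  refine ⟨i0.castPred hi0ne, ?_, ?_⟩
  · rw [Fin.castSucc_castPred]; exact hi0lt
  · have hsucc : ¬ P.pt (i0.castPred hi0ne).succ < q := by
      intro hlt
      have hmem : (i0.castPred hi0ne).succ ∈
          Finset.univ.filter (fun i : Fin (P.d + 2) => P.pt i < q) := by simpa using hlt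
      have hle := Finset.le_max' _ _ hmem
      rw [← hi0] at hle
      have : i0 < (i0.castPred hi0ne).succ := by
        conv_lhs => rw [← Fin.castSucc_castPred i0 hi0ne]
        exact Fin.castSucc_lt_succ
      exact absurd hle (not_le.mpr this)
    exact lt_of_le_of_ne (not_lt.mp hsucc) (hne _).symm

lemma contAt_of_not_D {f : ℝ → ℝ} (P : PiecewiseContData f) {q : ℝ}
    (hq : q ∈ Icc (0:ℝ) 1) (hD : q ∉ P.D) : ContinuousAt f q := by
  obtain ⟨i, hi⟩ := mem_Ioo_of_not_D P hq hD
  exact (P.cont i).continuousAt (Ioo_mem_nhds hi.1 hi.2)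

lemma Ioo_subset_Icc' {f : ℝ → ℝ} (P : PiecewiseContData f) (i : Fin (P.d + 1)) :
    Ioo (P.pt i.castSucc) (P.pt i.succ) ⊆ Icc (0:ℝ) 1 := by
  intro z hz
  constructor
  · rw [← P.first]
    exact le_trans (P.mono.monotone (Fin.zero_le _)) hz.1.le
  · rw [← P.last]
    exact le_trans hz.2.le (P.mono.monotone (Fin.le_last _))

lemma pt_lt_pt {f : ℝ → ℝ} (P : PiecewiseContData f) (i : Fin (P.d + 1)) :
    P.pt i.castSucc < P.pt i.succ := P.mono Fin.castSucc_lt_succ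

lemma wR_mem_Icc {f : ℝ → ℝ} (hf : MapsTo f (Icc (0:ℝ) 1) (Icc (0:ℝ) 1))
    (P : PiecewiseContData f) (i : Fin (P.d + 1)) :
    P.wR i ∈ Icc (0:ℝ) 1 := by
  have hne : (𝓝[Ioo (P.pt i.castSucc) (P.pt i.succ)] (P.pt i.castSucc)).NeBot := by
    rw [← mem_closure_iff_nhdsWithin_neBot, closure_Ioo (pt_lt_pt P i).ne]
    exact ⟨le_rfl, (pt_lt_pt P i).le⟩
  exact isClosed_Icc.mem_of_tendsto (P.wR_lim i)
    (eventually_mem_nhdsWithin.mono (fun z hz => hf (Ioo_subset_Icc' P i hz)))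

lemma wL_mem_Icc {f : ℝ → ℝ} (hf : MapsTo f (Icc (0:ℝ) 1) (Icc (0:ℝ) 1))
    (P : PiecewiseContData f) (i : Fin (P.d + 1)) :
    P.wL i ∈ Icc (0:ℝ) 1 := by
  have hne : (𝓝[Ioo (P.pt i.castSucc) (P.pt i.succ)] (P.pt i.succ)).NeBot := by
    rw [← mem_closure_iff_nhdsWithin_neBot, closure_Ioo (pt_lt_pt P i).ne]
    exact ⟨(pt_lt_pt P i).le, le_rfl⟩
  exact isClosed_Icc.mem_of_tendsto (P.wL_lim i)
    (eventually_mem_nhdsWithin.mono (fun z hz => hf (Ioo_subset_Icc' P i hz)))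

def Freq (f : ℝ → ℝ) (p : ℝ) (n : ℕ → ℕ) (c q : ℝ) : Prop :=
  ∀ δ > (0:ℝ), ∃ K : ℝ, ∀ J : ℕ, ∃ j ≥ J,
    c * (n j) - K ≤ (cnt f p (n j) (Metric.ball q δ) : ℝ)

def FreqR (f : ℝ → ℝ) (p : ℝ) (n : ℕ → ℕ) (c q : ℝ) : Prop :=
  ∀ δ > (0:ℝ), ∃ K : ℝ, ∀ J : ℕ, ∃ j ≥ J,
    c * (n j) - K ≤ (cnt f p (n j) (Ioo q (q + δ)) : ℝ)

def FreqL (f : ℝ → ℝ) (p : ℝ) (n : ℕ → ℕ) (c q : ℝ) : Prop :=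
  ∀ δ > (0:ℝ), ∃ K : ℝ, ∀ J : ℕ, ∃ j ≥ J,
    c * (n j) - K ≤ (cnt f p (n j) (Ioo (q - δ) q) : ℝ)

lemma Freq.push {f : ℝ → ℝ} {p : ℝ} {n : ℕ → ℕ} {c q : ℝ}
    (hcont : ContinuousAt f q) (h : Freq f p n c q) : Freq f p n c (f q) := by
  intro δ hδ
  obtain ⟨δ', hδ', hmap⟩ := Metric.continuousAt_iff.mp hcont δ hδ
  obtain ⟨K, hK⟩ := h δ' hδ'
  refine ⟨K + 1, fun J => ?_⟩
  obtain ⟨j, hj, hle⟩ := hK J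
  refine ⟨j, hj, ?_⟩
  have hs := cnt_shift f p 1 (s := Metric.ball q δ') (t := Metric.ball (f q) δ)
    (fun z hz => by simpa using hmap (by simpa using hz)) (n j)
  have : (cnt f p (n j) (Metric.ball q δ') : ℝ) ≤ (cnt f p (n j) (Metric.ball (f q) δ) : ℝ) + 1 := by
    exact_mod_cast hs
  linarith

/-- The core lemma: the orbit of `p` cannot frequently spend a positive fraction of
its time near a point `q` whose forward orbit avoids `D`. -/
lemma no_freq {f : ℝ → ℝ} (hf : MapsTo f (Icc (0:ℝ) 1) (Icc (0:ℝ) 1))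
    (P : PiecewiseContData f) (hnp : NoPeriodicPts f) {p : ℝ} {n : ℕ → ℕ}
    (hn : StrictMono n) {q c : ℝ} (hq : q ∈ Icc (0:ℝ) 1)
    (horb : ∀ k : ℕ, f^[k] q ∉ P.D) (hc : 0 < c) (hF : Freq f p n c q) : False := by
  classical
  set y : ℕ → ℝ := fun s => f^[s] q with hy
  have hyIcc : ∀ s, y s ∈ Icc (0:ℝ) 1 := fun s => iter_mem_Icc hf hq s
  have hcont : ∀ s, ContinuousAt f (y s) := fun s => contAt_of_not_D P (hyIcc s) (horb s)
  have hyinj : ∀ s t : ℕ, s < t → y s ≠ y t := by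
    intro s t hst heq
    refine hnp (y s) (hyIcc s) (t - s) (by omega) ?_
    have h1 : f^[t - s] (f^[s] q) = f^[t] q := by
      rw [← Function.iterate_add_apply]
      congr 1
      omega
    rw [hy]
    simp only
    rw [h1]
    exact heq.symm
  set N : ℕ := max 1 ⌈2 / c⌉₊ with hN
  have hN2 : 2 ≤ ((N : ℝ) + 1) * c := by
    have h1 : 2 / c ≤ (⌈2 / c⌉₊ : ℝ) := Nat.le_ceil _
    have h2 : ((⌈2 / c⌉₊ : ℕ) : ℝ) ≤ (N : ℝ) := by
      exact_mod_cast Nat.cast_le.mpr (le_max_right _ _)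
    have h3 : 2 / c ≤ (N : ℝ) := le_trans h1 h2
    have h4 : 2 ≤ (N : ℝ) * c := by
      rw [div_le_iff₀ hc] at h3
      linarith
    nlinarith
  have hN1 : 1 ≤ N := le_max_left _ _
  -- separation
  set F : Finset ℝ := (((Finset.range (N+1)) ×ˢ (Finset.range (N+1))).filter
    (fun st => st.1 < st.2)).image (fun st => dist (y st.1) (y st.2)) with hFdef
  have hFne : F.Nonempty := by
    refine ⟨dist (y 0) (y 1), ?_⟩
    rw [hFdef]
    refine Finset.mem_image.mpr ⟨(0, 1), ?_, rfl⟩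
    simp only [Finset.mem_filter, Finset.mem_product, Finset.mem_range]
    omega
  set d0 : ℝ := F.min' hFne with hd0
  have hd0pos : 0 < d0 := by
    rw [hd0, Finset.lt_min'_iff]
    intro r hr
    rw [hFdef] at hr
    obtain ⟨⟨s, t⟩, hmem, rfl⟩ := Finset.mem_image.mp hr
    simp only [Finset.mem_filter, Finset.mem_product, Finset.mem_range] at hmem
    exact dist_pos.mpr (hyinj s t hmem.2)
  set δ0 : ℝ := d0 / 3 with hδ0
  have hδ0pos : 0 < δ0 := by positivity
  have hsep : ∀ s t : ℕ, s < t → t ≤ N → d0 ≤ dist (y s) (y t) := by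
    intro s t hst htN
    refine Finset.min'_le _ _ ?_
    rw [hFdef]
    refine Finset.mem_image.mpr ⟨(s, t), ?_, rfl⟩
    simp only [Finset.mem_filter, Finset.mem_product, Finset.mem_range]
    omega
  -- the chain of radii
  have chain : ∀ t : ℕ, t ≤ N → ∃ η, 0 < η ∧ η ≤ δ0 ∧
      ∀ z, dist z (y (N - t)) < η → ∀ s, s ≤ t → dist (f^[s] z) (y (N - t + s)) < δ0 := by
    intro t
    induction t with
    | zero =>
      intro _
      refine ⟨δ0, hδ0pos, le_rfl, fun z hz s hs => ?_⟩
      interval_cases s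
      simpa using hz
    | succ t ih =>
      intro hN'
      obtain ⟨η, hη, hηδ, H⟩ := ih (by omega)
      obtain ⟨η', hη', hmap⟩ := Metric.continuousAt_iff.mp (hcont (N - (t+1))) η hη
      have hfy : f (y (N - (t+1))) = y (N - t) := by
        rw [hy]
        simp only
        rw [← Function.iterate_succ_apply' f]
        congr 1
        omega
      refine ⟨min η' δ0, lt_min hη' hδ0pos, min_le_right _ _, fun z hz s hs => ?_⟩
      cases s with
      | zero =>
        simpa using lt_of_lt_of_le hz (min_le_right _ _)
      | succ s =>
        rw [Function.iterate_succ_apply]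
        have h1 : dist (f z) (y (N - t)) < η := by
          rw [← hfy]
          exact hmap (lt_of_lt_of_le hz (min_le_left _ _))
        have h2 := H (f z) h1 s (by omega)
        have h3 : N - t + s = N - (t+1) + (s+1) := by omega
        rw [← h3]
        exact h2
  obtain ⟨η, hηpos, hηδ0, hchain⟩ := chain N le_rfl
  have hchain0 : ∀ z, dist z q < η → ∀ s, s ≤ N → dist (f^[s] z) (y s) < δ0 := by
    intro z hz s hs
    have h0 := hchain z (by simpa [hy] using hz) s hs
    simpa using h0
  obtain ⟨K, hK⟩ := hF η hηpos
  set C : ℝ := (N + 1) * (|K| + N) with hC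
  obtain ⟨j, hjJ, hcnt⟩ := hK (⌈C⌉₊ + 1)
  set M : ℕ := n j with hM
  have hMC : C < (M : ℝ) := by
    have h1 : (⌈C⌉₊ + 1 : ℕ) ≤ M := le_trans hjJ (hn.le_apply)
    have h2 : C ≤ (⌈C⌉₊ : ℝ) := Nat.le_ceil _
    have h3 : ((⌈C⌉₊ + 1 : ℕ) : ℝ) ≤ (M : ℝ) := by exact_mod_cast h1
    push_cast at h3
    linarith
  -- counts at each point of the orbit of q
  classical
  set T : ℕ → Finset ℕ := fun s => (Finset.range M).filter
    (fun k => f^[k] p ∈ Metric.ball (y s) δ0) with hT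
  have hTcnt : ∀ s, (T s).card = cnt f p M (Metric.ball (y s) δ0) := by
    intro s
    rw [hT, cnt]
  have key : ∀ s, s ≤ N → c * M - K - s ≤ ((T s).card : ℝ) := by
    intro s hs
    have hmap : ∀ z ∈ Metric.ball q η, f^[s] z ∈ Metric.ball (y s) δ0 := by
      intro z hz
      exact Metric.mem_ball.mpr (hchain0 z (Metric.mem_ball.mp hz) s hs)
    have hshift := cnt_shift f p s hmap M
    have hshift' : (cnt f p M (Metric.ball q η) : ℝ) ≤ (cnt f p M (Metric.ball (y s) δ0) : ℝ) + s := by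
      exact_mod_cast hshift
    rw [hTcnt s]
    linarith [hcnt]
  -- disjointness
  have hdisj : ∀ s ∈ Finset.range (N+1), ∀ t ∈ Finset.range (N+1), s ≠ t →
      Disjoint (T s) (T t) := by
    intro s hs t ht hst
    rw [Finset.disjoint_left]
    intro k hk hk'
    rw [hT] at hk hk'
    simp only [Finset.mem_filter, Metric.mem_ball] at hk hk'
    simp only [Finset.mem_range] at hs ht
    have hd : dist (y s) (y t) < 2 * δ0 := by
      calc dist (y s) (y t) ≤ dist (y s) (f^[k] p) + dist (f^[k] p) (y t) := dist_triangle _ _ _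
        _ < δ0 + δ0 := by rw [dist_comm (y s)]; exact add_lt_add hk.2 hk'.2
        _ = 2 * δ0 := by ring
    rcases lt_or_gt_of_ne hst with h | h
    · have hs1 := hsep s t h (by omega)
      rw [hδ0] at hd
      linarith
    · have hs1 := hsep t s h (by omega)
      rw [dist_comm] at hd
      rw [hδ0] at hd
      linarith
  have hsum : ∑ s ∈ Finset.range (N+1), (T s).card ≤ M := by
    rw [← Finset.card_biUnion hdisj]
    refine le_trans (Finset.card_le_card ?_) (by simp : (Finset.range M).card ≤ M)
    intro k hk
    obtain ⟨s, _, hks⟩ := Finset.mem_biUnion.mp hk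
    rw [hT] at hks
    exact Finset.mem_of_mem_filter _ hks
  -- numeric contradiction
  have hlow : ((N:ℝ) + 1) * (c * M - K - N) ≤ (M : ℝ) := by
    have h1 : ∀ s ∈ Finset.range (N+1), c * M - K - N ≤ ((T s).card : ℝ) := by
      intro s hs
      simp only [Finset.mem_range] at hs
      have hk1 := key s (by omega)
      have hsN : (s : ℝ) ≤ (N : ℝ) := by exact_mod_cast Nat.lt_succ_iff.mp hs
      linarith
    have h2 := Finset.card_nsmul_le_sum (Finset.range (N+1)) (fun s => ((T s).card : ℝ))
      (c * M - K - N) h1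
    have h3 : (∑ s ∈ Finset.range (N+1), ((T s).card : ℝ)) ≤ (M : ℝ) := by
      exact_mod_cast hsum
    simp only [Finset.card_range, nsmul_eq_mul] at h2
    push_cast at h2
    linarith
  have hKabs : K ≤ |K| := le_abs_self K
  have hM0 : (0:ℝ) ≤ M := Nat.cast_nonneg _
  nlinarith [mul_le_mul_of_nonneg_right hN2 hM0]

lemma cnt_eq_zero {f : ℝ → ℝ} {p : ℝ} {s : Set ℝ} (N : ℕ) (h : ∀ k : ℕ, f^[k] p ∉ s) :
    cnt f p N s = 0 := by
  classical
  unfold cnt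
  rw [Finset.card_eq_zero, Finset.filter_eq_empty_iff]
  exact fun k _ => h k

lemma not_freq_bounded {n : ℕ → ℕ} (hn : StrictMono n) {c K : ℝ} (hc : 0 < c)
    (h : ∀ J : ℕ, ∃ j ≥ J, c * (n j : ℝ) - K ≤ 0) : False := by
  obtain ⟨j, hj, hle⟩ := h (⌈K / c⌉₊ + 1)
  have h1 : (n j : ℝ) ≤ K / c := by
    rw [le_div_iff₀ hc]
    nlinarith
  have h2 : ((⌈K / c⌉₊ + 1 : ℕ) : ℝ) ≤ (n j : ℝ) := by
    exact_mod_cast le_trans hj hn.le_apply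
  have h3 : K / c ≤ (⌈K / c⌉₊ : ℝ) := Nat.le_ceil _
  push_cast at h2
  linarith

lemma freq_split {f : ℝ → ℝ} {p : ℝ} {n : ℕ → ℕ} {c q : ℝ} (hc : 0 < c)
    (hne : ∀ k : ℕ, f^[k] p ≠ q) (hF : Freq f p n c q) :
    FreqR f p n (c/2) q ∨ FreqL f p n (c/2) q := by
  by_cases hR : FreqR f p n (c/2) q
  · exact Or.inl hR
  right
  rw [FreqR] at hR
  push_neg at hR
  obtain ⟨δ₁, hδ₁, hneg⟩ := hR
  obtain ⟨J₀, hJ₀⟩ := hneg 0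
  intro δ hδ
  have hδ₂ : 0 < min δ δ₁ := lt_min hδ hδ₁
  obtain ⟨K, hK⟩ := hF (min δ δ₁) hδ₂
  refine ⟨K, fun J => ?_⟩
  obtain ⟨j, hj, hle⟩ := hK (max J J₀)
  refine ⟨j, le_trans (le_max_left _ _) hj, ?_⟩
  have hRsmall := hJ₀ j (le_trans (le_max_right _ _) hj)
  have hsplit := cnt_split f p (n j) q (min δ δ₁) hne
  have hL : cnt f p (n j) (Ioo (q - min δ δ₁) q) ≤ cnt f p (n j) (Ioo (q - δ) q) :=
    cnt_mono f p (n j) (Ioo_subset_Ioo (by have := min_le_left δ δ₁; linarith) le_rfl)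
  have hR' : cnt f p (n j) (Ioo q (q + min δ δ₁)) ≤ cnt f p (n j) (Ioo q (q + δ₁)) :=
    cnt_mono f p (n j) (Ioo_subset_Ioo le_rfl (by have := min_le_right δ δ₁; linarith))
  have c1 : (cnt f p (n j) (Metric.ball q (min δ δ₁)) : ℝ)
      ≤ (cnt f p (n j) (Ioo (q - min δ δ₁) q) : ℝ) + (cnt f p (n j) (Ioo q (q + min δ δ₁)) : ℝ) := by
    exact_mod_cast hsplit
  have c2 : (cnt f p (n j) (Ioo (q - min δ δ₁) q) : ℝ) ≤ (cnt f p (n j) (Ioo (q - δ) q) : ℝ) := by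
    exact_mod_cast hL
  have c3 : (cnt f p (n j) (Ioo q (q + min δ δ₁)) : ℝ) ≤ (cnt f p (n j) (Ioo q (q + δ₁)) : ℝ) := by
    exact_mod_cast hR'
  linarith

lemma freqR_boundary {f : ℝ → ℝ} {p : ℝ} {n : ℕ → ℕ} {c : ℝ} (P : PiecewiseContData f)
    (i : Fin (P.d + 1)) (hF : FreqR f p n c (P.pt i.castSucc)) :
    Freq f p n c (P.wR i) := by
  intro δ hδ
  set q := P.pt i.castSucc with hqdef
  set b := P.pt i.succ with hbdef
  have hqb : q < b := pt_lt_pt P i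
  have hmem : f ⁻¹' (Metric.ball (P.wR i) δ) ∈ 𝓝[Ioo q b] q :=
    (P.wR_lim i) (Metric.ball_mem_nhds _ hδ)
  obtain ⟨ε', hε', hsub⟩ := Metric.mem_nhdsWithin_iff.mp hmem
  have hδ'' : 0 < min ε' (b - q) := lt_min hε' (by linarith)
  obtain ⟨K, hK⟩ := hF (min ε' (b - q)) hδ''
  refine ⟨K + 1, fun J => ?_⟩
  obtain ⟨j, hj, hle⟩ := hK J
  refine ⟨j, hj, ?_⟩
  have hmap : ∀ z ∈ Ioo q (q + min ε' (b - q)), f^[1] z ∈ Metric.ball (P.wR i) δ := by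
    intro z hz
    simp only [Function.iterate_one]
    refine hsub ⟨?_, hz.1, ?_⟩
    · rw [Metric.mem_ball, Real.dist_eq, abs_sub_lt_iff]
      constructor
      · have := hz.2
        have h1 : min ε' (b - q) ≤ ε' := min_le_left _ _
        linarith
      · have := hz.1
        linarith
    · have h1 : min ε' (b - q) ≤ b - q := min_le_right _ _
      have := hz.2
      linarith
  have hs := cnt_shift f p 1 hmap (n j)
  have hs' : (cnt f p (n j) (Ioo q (q + min ε' (b - q))) : ℝ)
      ≤ (cnt f p (n j) (Metric.ball (P.wR i) δ) : ℝ) + 1 := by exact_mod_cast hs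
  linarith

lemma freqL_boundary {f : ℝ → ℝ} {p : ℝ} {n : ℕ → ℕ} {c : ℝ} (P : PiecewiseContData f)
    (i : Fin (P.d + 1)) (hF : FreqL f p n c (P.pt i.succ)) :
    Freq f p n c (P.wL i) := by
  intro δ hδ
  set a := P.pt i.castSucc with hadef
  set q := P.pt i.succ with hqdef
  have hqb : a < q := pt_lt_pt P i
  have hmem : f ⁻¹' (Metric.ball (P.wL i) δ) ∈ 𝓝[Ioo a q] q :=
    (P.wL_lim i) (Metric.ball_mem_nhds _ hδ)
  obtain ⟨ε', hε', hsub⟩ := Metric.mem_nhdsWithin_iff.mp hmem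
  have hδ'' : 0 < min ε' (q - a) := lt_min hε' (by linarith)
  obtain ⟨K, hK⟩ := hF (min ε' (q - a)) hδ''
  refine ⟨K + 1, fun J => ?_⟩
  obtain ⟨j, hj, hle⟩ := hK J
  refine ⟨j, hj, ?_⟩
  have hmap : ∀ z ∈ Ioo (q - min ε' (q - a)) q, f^[1] z ∈ Metric.ball (P.wL i) δ := by
    intro z hz
    simp only [Function.iterate_one]
    refine hsub ⟨?_, ?_, hz.2⟩
    · rw [Metric.mem_ball, Real.dist_eq, abs_sub_lt_iff]
      have h1 : min ε' (q - a) ≤ ε' := min_le_left _ _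
      have h2 := hz.1
      have h3 := hz.2
      constructor <;> linarith
    · have h1 : min ε' (q - a) ≤ q - a := min_le_right _ _
      have := hz.1
      linarith
  have hs := cnt_shift f p 1 hmap (n j)
  have hs' : (cnt f p (n j) (Ioo (q - min ε' (q - a)) q) : ℝ)
      ≤ (cnt f p (n j) (Metric.ball (P.wL i) δ) : ℝ) + 1 := by exact_mod_cast hs
  linarith

/-- with `p` a point whose forward orbit avoids the partition set `D`,
and `μ` a weak* limit of a subsequence of the Birkhoff averages `μ_n`, every point
`x ∈ [0,1]` has a relatively open subinterval neighborhood whose `μ_{n_j}`-measure is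
eventually `< ε`. -/
theorem stmt3 (f : ℝ → ℝ) (hf : MapsTo f (Icc (0:ℝ) 1) (Icc (0:ℝ) 1))
    (P : PiecewiseContData f) (hnc : P.NoConnections) (hnp : NoPeriodicPts f)
    (p : ℝ) (hp : p ∈ Icc (0:ℝ) 1) (hporb : ∀ k : ℕ, f^[k] p ∉ P.D)
    (n : ℕ → ℕ) (hn : StrictMono n) (μ : Measure ℝ) (hμ : IsProbabilityMeasure μ)
    (hconv : ∀ φ : ℝ → ℝ, Continuous φ →
      Tendsto (fun j => ∫ x, φ x ∂(birkhoffMeasure f p (n j))) atTop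
        (𝓝 (∫ x, φ x ∂μ)))
    (x : ℝ) (hx : x ∈ Icc (0:ℝ) 1) (ε : ℝ) (hε : 0 < ε) :
    ∃ a b : ℝ, a < x ∧ x < b ∧ ∃ j₀ : ℕ, ∀ j ≥ j₀,
      birkhoffMeasure f p (n j) (Ioo a b ∩ Icc (0:ℝ) 1) < ENNReal.ofReal ε := by
  by_contra hcon
  push_neg at hcon
  have horbIcc : ∀ k : ℕ, f^[k] p ∈ Icc (0:ℝ) 1 := fun k => iter_mem_Icc hf hp k
  -- convert the failed conclusion into a `Freq` statement at `x`
  have hFx : Freq f p n ε x := by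
    intro δ hδ
    refine ⟨0, fun J => ?_⟩
    obtain ⟨j, hj, hle⟩ := hcon (x - δ) (x + δ) (by linarith) (by linarith) J
    refine ⟨j, hj, ?_⟩
    have hnj0 : n j ≠ 0 := by
      intro h0
      rw [h0] at hle
      have hz : birkhoffMeasure f p 0 (Ioo (x-δ) (x+δ) ∩ Icc (0:ℝ) 1) = 0 := by
        simp [birkhoffMeasure]
      rw [hz] at hle
      rw [le_zero_iff, ENNReal.ofReal_eq_zero] at hle
      linarith
    have hmeas : MeasurableSet (Ioo (x-δ) (x+δ) ∩ Icc (0:ℝ) 1) :=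
      measurableSet_Ioo.inter measurableSet_Icc
    have h1 : birkhoffMeasure f p (n j) (Ioo (x-δ) (x+δ) ∩ Icc (0:ℝ) 1)
        ≤ (cnt f p (n j) (Metric.ball x δ) : ℝ≥0∞) / (n j : ℝ≥0∞) := by
      rw [birkhoff_apply f p (n j) _ hmeas]
      gcongr
      exact_mod_cast cnt_mono f p (n j)
        (by rw [Real.ball_eq_Ioo]; exact inter_subset_left)
    have h2 : ENNReal.ofReal ε ≤ (cnt f p (n j) (Metric.ball x δ) : ℝ≥0∞) / (n j : ℝ≥0∞) :=
      le_trans hle h1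
    have hfin : ((cnt f p (n j) (Metric.ball x δ) : ℝ≥0∞) / (n j : ℝ≥0∞)) ≠ ⊤ := by
      rw [ENNReal.div_eq_inv_mul]
      refine ENNReal.mul_ne_top ?_ (by simp)
      simp only [ENNReal.inv_ne_top, ne_eq, Nat.cast_eq_zero]
      exact hnj0
    have h3 : ε ≤ (cnt f p (n j) (Metric.ball x δ) : ℝ) / (n j : ℝ) := by
      have h4 := (ENNReal.ofReal_le_iff_le_toReal hfin).mp h2
      rw [ENNReal.toReal_div] at h4
      rwa [show ((cnt f p (n j) (Metric.ball x δ) : ℝ≥0∞)).toReal = (cnt f p (n j) (Metric.ball x δ) : ℝ) from rfl, show ((n j : ℝ≥0∞)).toReal = (n j : ℝ) from rfl] at h4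
    have hnpos : (0:ℝ) < (n j : ℝ) := by
      exact_mod_cast Nat.pos_of_ne_zero hnj0
    rw [le_div_iff₀ hnpos] at h3
    linarith
  by_cases hxorb : ∀ k : ℕ, f^[k] x ∉ P.D
  · exact no_freq hf P hnp hn hx hxorb hε hFx
  · push_neg at hxorb
    have hex : ∃ k, f^[k] x ∈ P.D := hxorb
    classical
    set k₀ := Nat.find hex with hk₀
    have hqD : f^[k₀] x ∈ P.D := Nat.find_spec hex
    have hmin : ∀ m, m < k₀ → f^[m] x ∉ P.D := fun m hm => Nat.find_min hex hm
    have hiter : ∀ m, m ≤ k₀ → Freq f p n ε (f^[m] x) := by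
      intro m
      induction m with
      | zero =>
        intro _
        simpa using hFx
      | succ m ih =>
        intro hm
        have h1 := ih (by omega)
        have hm' : f^[m] x ∉ P.D := hmin m (by omega)
        have hcont := contAt_of_not_D P (iter_mem_Icc hf hx m) hm'
        have h2 := h1.push hcont
        rwa [← Function.iterate_succ_apply' f] at h2
    set q := f^[k₀] x with hqdef
    obtain ⟨i, hi⟩ := hqD
    have hqIcc : q ∈ Icc (0:ℝ) 1 := iter_mem_Icc hf hx k₀
    have hpq : ∀ k : ℕ, f^[k] p ≠ q := by
      intro k hk
      exact hporb k ⟨i, hi.trans hk.symm⟩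
    rcases freq_split hε hpq (hiter k₀ le_rfl) with hFR | hFL
    · -- mass on the right of q; q must be an interior or left partition point
      have hq1 : q < 1 := by
        rcases lt_or_eq_of_le hqIcc.2 with hlt | heq
        · exact hlt
        exfalso
        obtain ⟨K, hK⟩ := hFR 1 one_pos
        refine not_freq_bounded hn (half_pos hε) (K := K) (fun J => ?_)
        obtain ⟨j, hj, hle⟩ := hK J
        refine ⟨j, hj, ?_⟩
        have hzero : cnt f p (n j) (Ioo q (q + 1)) = 0 := by
          refine cnt_eq_zero _ (fun k hk => ?_)
          have h2 := (horbIcc k).2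
          rw [← heq] at h2
          exact absurd hk.1 (not_lt.mpr h2)
        rw [hzero] at hle
        simpa using hle
      have hine : i ≠ Fin.last (P.d + 1) := by
        intro h
        rw [h, P.last] at hi
        exact hq1.ne' hi
      have hcs : P.pt (i.castPred hine).castSucc = q := by
        rw [Fin.castSucc_castPred]
        exact hi
      have hFw : Freq f p n (ε/2) (P.wR (i.castPred hine)) :=
        freqR_boundary P _ (hcs ▸ hFR)
      exact no_freq hf P hnp hn (wR_mem_Icc hf P _)
        (fun k => hnc.2 _ (Set.mem_union_left _ ⟨_, rfl⟩) k) (half_pos hε) hFw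
    · -- mass on the left of q
      have hq0 : 0 < q := by
        rcases lt_or_eq_of_le hqIcc.1 with hlt | heq
        · exact hlt
        exfalso
        obtain ⟨K, hK⟩ := hFL 1 one_pos
        refine not_freq_bounded hn (half_pos hε) (K := K) (fun J => ?_)
        obtain ⟨j, hj, hle⟩ := hK J
        refine ⟨j, hj, ?_⟩
        have hzero : cnt f p (n j) (Ioo (q - 1) q) = 0 := by
          refine cnt_eq_zero _ (fun k hk => ?_)
          have h2 := (horbIcc k).1
          rw [← heq] at hk
          exact absurd hk.2 (not_lt.mpr (heq ▸ h2))
        rw [hzero] at hle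
        simpa using hle
      have hine : i ≠ 0 := by
        intro h
        rw [h, P.first] at hi
        exact hq0.ne hi
      obtain ⟨i', hi'⟩ := Fin.eq_succ_of_ne_zero hine
      have hcs : P.pt i'.succ = q := by rw [← hi']; exact hi
      have hFw : Freq f p n (ε/2) (P.wL i') :=
        freqL_boundary P _ (hcs ▸ hFL)
      exact no_freq hf P hnp hn (wL_mem_Icc hf P _)
        (fun k => hnc.2 _ (Set.mem_union_right _ ⟨_, rfl⟩) k) (half_pos hε) hFw
end

section
/- Let f : [0,1] → [0,1] be a piecewise continuous interval map with no connections and no periodic points, let p be a point whose forward orbit avoids the partition set D, let μ_n = (1/n) Σ_{k=0}^{n-1} δ_{f^k(p)}, and suppose μ_{n_j} → μ weak*. Then for every continuous function φ : [0,1] → ℝ, lim_{j→∞} ∫ (φ ∘ f) dμ_{n_j} = ∫ (φ ∘ f) dμ, even though φ ∘ f is in general only piecewise continuous. -/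
open Set Filter MeasureTheory Topology
open scoped ENNReal
open Metric

section Aux
open Metric

namespace PiecewiseContData
variable {f : ℝ → ℝ} (P : PiecewiseContData f)

lemma pt_mem_Icc (i : Fin (P.d + 2)) : P.pt i ∈ Icc (0:ℝ) 1 := by
  constructor
  · rw [← P.first]; exact P.mono.monotone (Fin.zero_le i)
  · rw [← P.last]; exact P.mono.monotone (Fin.le_last i)

lemma Ioo_subset_Icc (i : Fin (P.d + 1)) :
    Ioo (P.pt i.castSucc) (P.pt i.succ) ⊆ Icc (0:ℝ) 1 := fun y hy =>
  ⟨le_trans (P.pt_mem_Icc i.castSucc).1 hy.1.le, le_trans hy.2.le (P.pt_mem_Icc i.succ).2⟩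

lemma cover {x : ℝ} (hx : x ∈ Icc (0:ℝ) 1) (hxD : x ∉ P.D) :
    ∃ i : Fin (P.d + 1), x ∈ Ioo (P.pt i.castSucc) (P.pt i.succ) := by
  have hne : ∀ j, P.pt j ≠ x := fun j h => hxD ⟨j, h⟩
  set S := Finset.univ.filter (fun j => P.pt j < x) with hS
  have h0 : (0 : Fin (P.d+2)) ∈ S := by
    simp only [hS, Finset.mem_filter, Finset.mem_univ, true_and, P.first]
    exact lt_of_le_of_ne hx.1 (fun h => hne 0 (by rw [P.first, ← h]))
  have hSne : S.Nonempty := ⟨0, h0⟩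
  set j := S.max' hSne with hj
  have hjS : j ∈ S := S.max'_mem hSne
  have hjx : P.pt j < x := by simpa [hS] using hjS
  have hjlast : j ≠ Fin.last (P.d+1) := by
    intro h
    rw [h, P.last] at hjx
    exact absurd hx.2 (not_le.2 hjx)
  refine ⟨j.castPred hjlast, ?_, ?_⟩
  · rw [Fin.castSucc_castPred]; exact hjx
  · by_contra hcon
    push_neg at hcon
    have hlt : P.pt ((j.castPred hjlast).succ) < x :=
      lt_of_le_of_ne hcon (hne _)
    have hmem : (j.castPred hjlast).succ ∈ S := by simpa [hS] using hlt
    have := S.le_max' _ hmem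
    rw [← hj] at this
    have h2 : j < (j.castPred hjlast).succ := by
      conv_lhs => rw [← Fin.castSucc_castPred j hjlast]
      exact Fin.castSucc_lt_succ
    exact absurd this (not_le.2 h2)

lemma contAt {x : ℝ} (hx : x ∈ Icc (0:ℝ) 1) (hxD : x ∉ P.D) : ContinuousAt f x := by
  obtain ⟨i, hi⟩ := P.cover hx hxD
  exact (P.cont i).continuousAt (Ioo_mem_nhds hi.1 hi.2)

lemma orbit_mem (hf : MapsTo f (Icc (0:ℝ) 1) (Icc (0:ℝ) 1)) {x : ℝ}
    (hx : x ∈ Icc (0:ℝ) 1) (k : ℕ) : f^[k] x ∈ Icc (0:ℝ) 1 := by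
  induction k with
  | zero => simpa using hx
  | succ k ih => rw [Function.iterate_succ_apply']; exact hf ih

lemma w_mem (hf : MapsTo f (Icc (0:ℝ) 1) (Icc (0:ℝ) 1)) (i : Fin (P.d+1)) :
    P.wR i ∈ Icc (0:ℝ) 1 ∧ P.wL i ∈ Icc (0:ℝ) 1 := by
  have hIoo : (Ioo (P.pt i.castSucc) (P.pt i.succ)).Nonempty :=
    nonempty_Ioo.2 (P.mono (Fin.castSucc_lt_succ : i.castSucc < i.succ))
  have hmemcl : P.pt i.castSucc ∈ closure (Ioo (P.pt i.castSucc) (P.pt i.succ)) := by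
    rw [closure_Ioo (P.mono (Fin.castSucc_lt_succ : i.castSucc < i.succ)).ne]
    exact ⟨le_rfl, (P.mono (Fin.castSucc_lt_succ : i.castSucc < i.succ)).le⟩
  have hmemcl' : P.pt i.succ ∈ closure (Ioo (P.pt i.castSucc) (P.pt i.succ)) := by
    rw [closure_Ioo (P.mono (Fin.castSucc_lt_succ : i.castSucc < i.succ)).ne]
    exact ⟨(P.mono (Fin.castSucc_lt_succ : i.castSucc < i.succ)).le, le_rfl⟩
  have hbotR : (𝓝[Ioo (P.pt i.castSucc) (P.pt i.succ)] (P.pt i.castSucc)).NeBot :=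
    mem_closure_iff_nhdsWithin_neBot.1 hmemcl
  have hbotL : (𝓝[Ioo (P.pt i.castSucc) (P.pt i.succ)] (P.pt i.succ)).NeBot :=
    mem_closure_iff_nhdsWithin_neBot.1 hmemcl'
  have hev : ∀ᶠ y in 𝓝[Ioo (P.pt i.castSucc) (P.pt i.succ)] (P.pt i.castSucc),
      f y ∈ Icc (0:ℝ) 1 :=
    eventually_nhdsWithin_of_forall (fun y hy => hf (P.Ioo_subset_Icc i hy))
  have hev' : ∀ᶠ y in 𝓝[Ioo (P.pt i.castSucc) (P.pt i.succ)] (P.pt i.succ),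
      f y ∈ Icc (0:ℝ) 1 :=
    eventually_nhdsWithin_of_forall (fun y hy => hf (P.Ioo_subset_Icc i hy))
  exact ⟨isClosed_Icc.mem_of_tendsto (P.wR_lim i) hev,
         isClosed_Icc.mem_of_tendsto (P.wL_lim i) hev'⟩

lemma pt_gap_exists {t s : Fin (P.d + 2)} (h : t < s) :
    ∃ i : Fin (P.d + 1), P.pt i.castSucc = P.pt t ∧ P.pt i.succ ≤ P.pt s := by
  have hlast : t ≠ Fin.last (P.d+1) := by
    intro hh; subst hh; exact absurd (Fin.le_last s) (not_le.2 h)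
  refine ⟨t.castPred hlast, by rw [Fin.castSucc_castPred], ?_⟩
  apply P.mono.monotone
  rw [Fin.le_def]
  have h1 : ((t.castPred hlast).succ : Fin (P.d+2)).val = t.val + 1 := by simp
  rw [h1]
  exact Nat.succ_le_of_lt (Fin.lt_def.1 h)

lemma adjacent {g : ℝ} (hg : ∀ i : Fin (P.d+1), g ≤ P.pt i.succ - P.pt i.castSucc)
    {t : Fin (P.d+2)} {j : Fin (P.d+1)} {z : ℝ}
    (hz : z ∈ Ioo (P.pt j.castSucc) (P.pt j.succ)) (hd : |z - P.pt t| < g) :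
    t = j.castSucc ∨ t = j.succ := by
  have habs1 : z - P.pt t < g := lt_of_le_of_lt (le_abs_self _) hd
  have habs2 : P.pt t - z < g := lt_of_le_of_lt (le_abs_self _) (by rwa [abs_sub_comm])
  rcases lt_trichotomy t (j.castSucc : Fin (P.d+2)) with h|h|h
  · exfalso
    obtain ⟨i, hi1, hi2⟩ := P.pt_gap_exists h
    have : g ≤ P.pt j.castSucc - P.pt t := by
      have := hg i; rw [hi1] at this; linarith
    linarith [hz.1]
  · exact Or.inl h
  · rcases lt_trichotomy t (j.succ : Fin (P.d+2)) with h'|h'|h'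
    · exfalso
      have hv1 := Fin.lt_def.1 h
      have hv2 := Fin.lt_def.1 h'
      have : (j.castSucc : Fin (P.d+2)).val = j.val := by simp
      have : (j.succ : Fin (P.d+2)).val = j.val + 1 := by simp
      omega
    · exact Or.inr h'
    · exfalso
      obtain ⟨i, hi1, hi2⟩ := P.pt_gap_exists h'
      have : g ≤ P.pt t - P.pt j.succ := by
        have h3 := hg i
        have h4 : P.pt i.castSucc = P.pt j.succ := hi1
        linarith
      linarith [hz.2]


end PiecewiseContData


lemma birkhoff_integral (f : ℝ → ℝ) (p : ℝ) (g : ℝ → ℝ) (n : ℕ) :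
    ∫ x, g x ∂(birkhoffMeasure f p n)
      = (n : ℝ)⁻¹ * ∑ k ∈ Finset.range n, g (f^[k] p) := by
  unfold birkhoffMeasure
  rw [integral_smul_measure, integral_finset_sum_measure]
  · simp [integral_dirac, smul_eq_mul, ENNReal.toReal_inv]
  · intro i _
    exact (integrable_const (g (f^[i] p))).congr (ae_eq_dirac g).symm

lemma shadow (f : ℝ → ℝ) (s : Set ℝ) (x w : ℝ)
    (h0 : Tendsto f (𝓝[s] x) (𝓝 w)) :
    ∀ M : ℕ, (∀ m, m < M → ContinuousAt f (f^[m] w)) →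
    ∀ ε > 0, ∃ δ > 0, ∀ y ∈ s, dist y x < δ →
      ∀ m ≤ M, dist (f^[m+1] y) (f^[m] w) < ε := by
  intro M
  induction M with
  | zero =>
    intro _ ε hε
    obtain ⟨δ, hδ, H⟩ := (Metric.tendsto_nhdsWithin_nhds).1 h0 ε hε
    refine ⟨δ, hδ, fun y hy hyx m hm => ?_⟩
    obtain rfl : m = 0 := Nat.le_zero.1 hm
    simpa using H hy hyx
  | succ M ih =>
    intro hc ε hε
    obtain ⟨ε', hε', H'⟩ := Metric.continuousAt_iff.1 (hc M (Nat.lt_succ_self M)) ε hε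
    obtain ⟨δ, hδ, H⟩ := ih (fun m hm => hc m (hm.trans (Nat.lt_succ_self M))) (min ε ε')
      (lt_min hε hε')
    refine ⟨δ, hδ, fun y hy hyx m hm => ?_⟩
    rcases Nat.lt_succ_iff_lt_or_eq.1 (Nat.lt_succ_of_le hm) with hm' | rfl
    · exact lt_of_lt_of_le (H y hy hyx m (Nat.lt_succ_iff.1 hm')) (min_le_left _ _)
    · have h1 : dist (f^[M+1] y) (f^[M] w) < ε' :=
        lt_of_lt_of_le (H y hy hyx M le_rfl) (min_le_right _ _)
      have := H' h1
      rw [Function.iterate_succ_apply' f (M+1) y, Function.iterate_succ_apply' f M w]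
      exact this

lemma count_sep {S : Finset ℕ} {n M : ℕ} (hsub : S ⊆ Finset.range n)
    (hsep : ∀ k ∈ S, ∀ m ≤ M, k + m + 1 ∉ S) : S.card * (M + 1) ≤ n + M := by
  have hgap : ∀ k ∈ S, ∀ k' ∈ S, k < k' → k + M + 1 < k' := by
    intro k hk k' hk' hlt
    by_contra hcon
    push_neg at hcon
    have hm : k' - k - 1 ≤ M := by omega
    have heq : k + (k' - k - 1) + 1 = k' := by omega
    exact hsep k hk _ hm (by rw [heq]; exact hk')
  have hinj : Set.InjOn (fun q : ℕ × ℕ => q.1 + q.2)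
      ((S ×ˢ Finset.range (M+1)) : Finset (ℕ × ℕ)) := by
    intro a ha b hb hab
    simp only [Finset.coe_product, Set.mem_prod, Finset.mem_coe, Finset.mem_range] at ha hb
    simp only at hab
    rcases lt_trichotomy a.1 b.1 with h|h|h
    · have := hgap a.1 ha.1 b.1 hb.1 h; omega
    · have : a.2 = b.2 := by omega
      exact Prod.ext h this
    · have := hgap b.1 hb.1 a.1 ha.1 h; omega
  have hmap : ∀ q ∈ S ×ˢ Finset.range (M+1), q.1 + q.2 ∈ Finset.range (n + M) := by
    intro q hq
    rw [Finset.mem_product] at hq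
    have h1 := Finset.mem_range.1 (hsub hq.1)
    have h2 := Finset.mem_range.1 hq.2
    rw [Finset.mem_range]
    omega
  have := Finset.card_le_card_of_injOn _ hmap hinj
  simpa [Finset.card_product] using this

lemma measure_pt_zero (f : ℝ → ℝ) (hf : MapsTo f (Icc (0:ℝ) 1) (Icc (0:ℝ) 1))
    (P : PiecewiseContData f) (hnc : P.NoConnections)
    (p : ℝ) (hp : p ∈ Icc (0:ℝ) 1) (hporb : ∀ k : ℕ, f^[k] p ∉ P.D)
    (n : ℕ → ℕ) (hn : StrictMono n) (μ : Measure ℝ) (hμ : IsProbabilityMeasure μ)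
    (hconv : ∀ φ : ℝ → ℝ, Continuous φ →
      Tendsto (fun j => ∫ x, φ x ∂(birkhoffMeasure f p (n j))) atTop
        (𝓝 (∫ x, φ x ∂μ)))
    (t : Fin (P.d + 2)) : μ {P.pt t} = 0 := by
  classical
  set x := P.pt t with hx
  have hxD : x ∈ P.D := ⟨t, rfl⟩
  -- main step : for every M, (μ {x}).toReal ≤ 1/(M+1)
  have main : ∀ M : ℕ, (μ {x}).toReal ≤ ((M:ℝ) + 1)⁻¹ := by
    intro M
    -- the shadow targets
    set wfun : Fin (P.d+1) × Bool × Fin (M+1) → ℝ :=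
      fun q => f^[(q.2.2 : ℕ)] (if q.2.1 then P.wR q.1 else P.wL q.1) with hwfun
    have hWmem : ∀ (i : Fin (P.d+1)) (b : Bool), (if b then P.wR i else P.wL i) ∈ P.W := by
      intro i b
      cases b
      · exact Or.inr ⟨i, rfl⟩
      · exact Or.inl ⟨i, rfl⟩
    have hwnotD : ∀ q, wfun q ∉ P.D := fun q => hnc.2 _ (hWmem q.1 q.2.1) _
    have hwIcc : ∀ (i : Fin (P.d+1)) (b : Bool) (m : ℕ),
        f^[m] (if b then P.wR i else P.wL i) ∈ Icc (0:ℝ) 1 := by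
      intro i b m
      apply PiecewiseContData.orbit_mem hf _ m
      cases b
      · exact (P.w_mem hf i).2
      · exact (P.w_mem hf i).1
    set ρ := Finset.univ.inf' (Finset.univ_nonempty) (fun q => |wfun q - x|) with hρ
    have hρpos : 0 < ρ := by
      rw [hρ, Finset.lt_inf'_iff]
      intro q _
      rw [abs_pos, sub_ne_zero]
      exact fun h => hwnotD q (h ▸ hxD)
    have hρle : ∀ q, ρ ≤ |wfun q - x| := fun q => Finset.inf'_le _ (Finset.mem_univ q)
    -- continuity along limit-value orbits
    have hcw : ∀ (i : Fin (P.d+1)) (b : Bool), ∀ m, m < M →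
        ContinuousAt f (f^[m] (if b then P.wR i else P.wL i)) := by
      intro i b m _
      exact P.contAt (hwIcc i b m) (hnc.2 _ (hWmem i b) m)
    -- shadow radii for each one-sided branch
    have hδ : ∀ q : Fin (P.d+1) × Bool, ∃ δ > 0,
        ∀ y ∈ Ioo (P.pt q.1.castSucc) (P.pt q.1.succ),
          dist y (if q.2 then P.pt q.1.castSucc else P.pt q.1.succ) < δ →
          ∀ m ≤ M, dist (f^[m+1] y) (f^[m] (if q.2 then P.wR q.1 else P.wL q.1)) < ρ/2 := by
      rintro ⟨i, b⟩
      cases b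
      · simpa using shadow f _ (P.pt i.succ) (P.wL i) (P.wL_lim i) M
          (by simpa using hcw i false) (ρ/2) (half_pos hρpos)
      · simpa using shadow f _ (P.pt i.castSucc) (P.wR i) (P.wR_lim i) M
          (by simpa using hcw i true) (ρ/2) (half_pos hρpos)
    choose δf hδfpos hδf using hδ
    set δ0 := Finset.univ.inf' (Finset.univ_nonempty) δf with hδ0
    have hδ0pos : 0 < δ0 := by
      rw [hδ0, Finset.lt_inf'_iff]; exact fun q _ => hδfpos q
    have hδ0le : ∀ q, δ0 ≤ δf q := fun q => Finset.inf'_le _ (Finset.mem_univ q)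
    set gmin := Finset.univ.inf' (Finset.univ_nonempty)
      (fun i : Fin (P.d+1) => P.pt i.succ - P.pt i.castSucc) with hgmin
    have hgminpos : 0 < gmin := by
      rw [hgmin, Finset.lt_inf'_iff]
      exact fun i _ => sub_pos.2 (P.mono (Fin.castSucc_lt_succ : i.castSucc < i.succ))
    have hgminle : ∀ i : Fin (P.d+1), gmin ≤ P.pt i.succ - P.pt i.castSucc :=
      fun i => Finset.inf'_le _ (Finset.mem_univ i)
    set δ1 := min (min δ0 gmin) (ρ/2) with hδ1
    have hδ1pos : 0 < δ1 := lt_min (lt_min hδ0pos hgminpos) (half_pos hρpos)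
    -- separation of visits to the ball
    have hsep : ∀ k, f^[k] p ∈ ball x δ1 → ∀ m ≤ M, f^[k+m+1] p ∉ ball x δ1 := by
      intro k hk m hm
      set z := f^[k] p with hz
      have hzIcc : z ∈ Icc (0:ℝ) 1 := PiecewiseContData.orbit_mem hf hp k
      have hzD : z ∉ P.D := hporb k
      obtain ⟨j, hj⟩ := P.cover hzIcc hzD
      have hzx : |z - x| < gmin := by
        rw [← Real.dist_eq]
        exact lt_of_lt_of_le (mem_ball.1 hk) (le_trans (min_le_left _ _) (min_le_right _ _))
      have hiter : f^[k+m+1] p = f^[m+1] z := by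
        rw [hz]
        rw [← Function.iterate_add_apply]
        congr 1
        omega
      have hfar : ∀ b : Bool, (if b then P.pt j.castSucc else P.pt j.succ) = x →
          f^[k+m+1] p ∉ ball x δ1 := by
        intro b hbx
        have hball : dist z (if b then P.pt j.castSucc else P.pt j.succ) < δf (j, b) := by
          rw [hbx]
          exact lt_of_lt_of_le (mem_ball.1 hk)
            (le_trans (le_trans (min_le_left _ _) (min_le_left _ _)) (hδ0le (j, b)))
        have hsh := hδf (j, b) z hj hball m hm
        have hq : ρ ≤ |f^[m] (if b then P.wR j else P.wL j) - x| :=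
          hρle ⟨j, b, ⟨m, Nat.lt_succ_of_le hm⟩⟩
        rw [← Real.dist_eq] at hq
        have htri := dist_triangle (f^[m] (if b then P.wR j else P.wL j)) (f^[m+1] z) x
        rw [dist_comm (f^[m] _) (f^[m+1] z)] at htri
        have hge : ρ/2 ≤ dist (f^[m+1] z) x := by linarith
        rw [hiter, mem_ball, Real.dist_eq] at *
        intro hcon
        have : δ1 ≤ ρ/2 := min_le_right _ _
        linarith [hge, hcon]
      rcases P.adjacent hgminle hj hzx with hcase | hcase
      · exact hfar true (by simp [← hcase, hx])
      · exact hfar false (by simp [← hcase, hx])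
    -- the bump function
    set b : ℝ → ℝ := fun y => max 0 (1 - dist y x / δ1) with hb
    have hbcont : Continuous b :=
      continuous_const.max
        (continuous_const.sub ((continuous_id.dist continuous_const).div_const δ1))
    have hb0 : ∀ y, 0 ≤ b y := fun y => le_max_left _ _
    have hb1 : ∀ y, b y ≤ 1 := fun y => by
      rw [hb]
      apply max_le (by norm_num)
      have : 0 ≤ dist y x / δ1 := div_nonneg dist_nonneg hδ1pos.le
      linarith
    have hbx1 : b x = 1 := by simp [hb, dist_self]
    have hbout : ∀ y, y ∉ ball x δ1 → b y = 0 := by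
      intro y hy
      rw [mem_ball, not_lt] at hy
      rw [hb]
      apply max_eq_left
      have : (1:ℝ) ≤ dist y x / δ1 := (one_le_div hδ1pos).2 hy
      linarith
    -- integral bound along the subsequence
    have hint : ∀ j, ∫ y, b y ∂(birkhoffMeasure f p (n j)) ≤ ((M:ℝ)+1)⁻¹ + M / (n j) := by
      intro j
      rw [birkhoff_integral]
      set S := (Finset.range (n j)).filter (fun k => f^[k] p ∈ ball x δ1) with hS
      have hsum : ∑ k ∈ Finset.range (n j), b (f^[k] p) ≤ S.card := by
        rw [← Finset.sum_filter_add_sum_filter_not (Finset.range (n j))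
          (fun k => f^[k] p ∈ ball x δ1) (fun k => b (f^[k] p))]
        have h2 : ∑ k ∈ (Finset.range (n j)).filter (fun k => ¬ f^[k] p ∈ ball x δ1),
            b (f^[k] p) = 0 := by
          apply Finset.sum_eq_zero
          intro k hk
          exact hbout _ (Finset.mem_filter.1 hk).2
        rw [h2, add_zero]
        calc ∑ k ∈ S, b (f^[k] p) ≤ ∑ _k ∈ S, (1:ℝ) := Finset.sum_le_sum (fun k _ => hb1 _)
          _ = S.card := by simp
      have hcard : S.card * (M + 1) ≤ n j + M := by
        apply count_sep (Finset.filter_subset _ _)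
        intro k hk m hm hmem
        exact hsep k (Finset.mem_filter.1 hk).2 m hm (Finset.mem_filter.1 hmem).2
      rcases Nat.eq_zero_or_pos (n j) with h0 | hpos
      · rw [h0]
        simp only [Nat.cast_zero, inv_zero, zero_mul, div_zero, add_zero]
        positivity
      have hnpos : (0:ℝ) < n j := by exact_mod_cast hpos
      have hcard' : (S.card : ℝ) * ((M:ℝ) + 1) ≤ (n j : ℝ) + M := by exact_mod_cast hcard
      have hsum' : (0:ℝ) ≤ ∑ k ∈ Finset.range (n j), b (f^[k] p) :=
        Finset.sum_nonneg (fun k _ => hb0 _)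
      have hM1 : (0:ℝ) < (M:ℝ) + 1 := by positivity
      have step1 : ((n j : ℝ))⁻¹ * ∑ k ∈ Finset.range (n j), b (f^[k] p)
          ≤ ((n j : ℝ))⁻¹ * S.card := by
        apply mul_le_mul_of_nonneg_left hsum (by positivity)
      refine le_trans step1 ?_
      rw [inv_mul_le_iff₀ hnpos]
      have hexp : (n j:ℝ) * (((M:ℝ)+1)⁻¹ + M / n j) = (n j:ℝ) * ((M:ℝ)+1)⁻¹ + M := by
        field_simp
      rw [hexp, ← sub_nonneg]
      have h4 : (n j:ℝ) * ((M:ℝ)+1)⁻¹ + (M:ℝ) - (S.card:ℝ) =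
          (((n j:ℝ) + M) - S.card*((M:ℝ)+1))/((M:ℝ)+1) + M*(1 - ((M:ℝ)+1)⁻¹) := by
        field_simp; ring
      rw [h4]
      have h5 : ((M:ℝ)+1)⁻¹ ≤ 1 := by
        rw [inv_le_one_iff₀]; right; linarith
      have h6 : (0:ℝ) ≤ ((n j:ℝ) + M) - S.card*((M:ℝ)+1) := by linarith
      have h7 := div_nonneg h6 hM1.le
      have h8 : (0:ℝ) ≤ (M:ℝ)*(1 - ((M:ℝ)+1)⁻¹) :=
        mul_nonneg (Nat.cast_nonneg M) (by linarith)
      linarith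
    have hbconv := hconv b hbcont
    have hlimR : Tendsto (fun j => ((M:ℝ)+1)⁻¹ + M / (n j)) atTop (𝓝 (((M:ℝ)+1)⁻¹)) := by
      have h1 : Tendsto (fun j => ((n j : ℝ))) atTop atTop :=
        tendsto_natCast_atTop_atTop.comp hn.tendsto_atTop
      have h2 : Tendsto (fun j => (M:ℝ) / (n j)) atTop (𝓝 0) := by
        simpa [div_eq_mul_inv] using tendsto_const_nhds.mul h1.inv_tendsto_atTop
      simpa using tendsto_const_nhds.add h2
    have hble : ∫ y, b y ∂μ ≤ ((M:ℝ)+1)⁻¹ :=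
      le_of_tendsto_of_tendsto' hbconv hlimR hint
    have hbint : Integrable b μ := by
      refine Integrable.mono' (integrable_const 1) hbcont.aestronglyMeasurable ?_
      exact ae_of_all _ (fun y => by
        rw [Real.norm_eq_abs, abs_of_nonneg (hb0 y)]; exact hb1 y)
    have hiind : Integrable (Set.indicator {x} (fun _ => (1:ℝ))) μ :=
      (integrable_const 1).indicator (measurableSet_singleton x)
    have hmono : ∀ y, Set.indicator {x} (fun _ => (1:ℝ)) y ≤ b y := by
      intro y
      by_cases hyx : y = x
      · rw [hyx, Set.indicator_of_mem (Set.mem_singleton x)]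
        exact le_of_eq hbx1.symm
      · rw [Set.indicator_of_notMem (by simpa using hyx)]
        exact hb0 y
    have h9 : (μ {x}).toReal ≤ ∫ y, b y ∂μ := by
      have h10 : ∫ y, Set.indicator {x} (fun _ => (1:ℝ)) y ∂μ = (μ {x}).toReal := by
        rw [integral_indicator_const (1:ℝ) (measurableSet_singleton x)]
        simp; rfl
      rw [← h10]
      exact integral_mono hiind hbint hmono
    exact h9.trans hble
  have h0 : Tendsto (fun M : ℕ => ((M:ℝ)+1)⁻¹) atTop (𝓝 0) := by
    simpa only [one_div] using (tendsto_one_div_add_atTop_nhds_zero_nat (𝕜 := ℝ))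
  have hle0 : (μ {x}).toReal ≤ 0 := ge_of_tendsto' h0 main
  have hfin : μ {x} ≠ ⊤ := measure_ne_top μ _
  have htr : (μ {x}).toReal = 0 := le_antisymm hle0 ENNReal.toReal_nonneg
  exact ((ENNReal.toReal_eq_zero_iff _).1 htr).resolve_right hfin


end Aux

/-- along the weak*-convergent subsequence of Birkhoff averages, the
integrals of the (in general only piecewise continuous) function `φ ∘ f` also converge
to the integral against the limit measure, for every continuous `φ`. -/
theorem stmt5 (f : ℝ → ℝ) (hf : MapsTo f (Icc (0:ℝ) 1) (Icc (0:ℝ) 1))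
    (P : PiecewiseContData f) (hnc : P.NoConnections) (hnp : NoPeriodicPts f)
    (p : ℝ) (hp : p ∈ Icc (0:ℝ) 1) (hporb : ∀ k : ℕ, f^[k] p ∉ P.D)
    (n : ℕ → ℕ) (hn : StrictMono n) (μ : Measure ℝ) (hμ : IsProbabilityMeasure μ)
    (hconv : ∀ φ : ℝ → ℝ, Continuous φ →
      Tendsto (fun j => ∫ x, φ x ∂(birkhoffMeasure f p (n j))) atTop
        (𝓝 (∫ x, φ x ∂μ)))
    (φ : ℝ → ℝ) (hφ : Continuous φ) :
    Tendsto (fun j => ∫ x, φ (f x) ∂(birkhoffMeasure f p (n j))) atTop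
      (𝓝 (∫ x, φ (f x) ∂μ)) := by
  classical
  -- a bound for φ on [0,1]
  obtain ⟨C0, hC0⟩ := (isCompact_Icc : IsCompact (Icc (0:ℝ) 1)).exists_bound_of_continuousOn
    hφ.continuousOn
  set C := max C0 1 with hCdef
  have hCpos : (0:ℝ) < C := lt_of_lt_of_le one_pos (le_max_right _ _)
  have hCb : ∀ y ∈ Icc (0:ℝ) 1, |φ y| ≤ C := fun y hy =>
    le_trans (by simpa [Real.norm_eq_abs] using hC0 y hy) (le_max_left _ _)
  -- D is μ-null
  have hDnull : μ P.D = 0 := by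
    have hDeq : P.D = ⋃ i, {P.pt i} := Set.range_eq_iUnion P.pt
    rw [hDeq]
    exact measure_iUnion_null
      (fun i => measure_pt_zero f hf P hnc p hp hporb n hn μ hμ hconv i)
  -- μ is carried by [0,1]
  have hIccae : ∀ᵐ y ∂μ, y ∈ Icc (0:ℝ) 1 := by
    set χ : ℝ → ℝ := fun y => max 0 (1 - Metric.infDist y (Icc (0:ℝ) 1)) with hχdef
    have hχcont : Continuous χ :=
      continuous_const.max (continuous_const.sub (continuous_infDist_pt _))
    have hχ0 : ∀ y, 0 ≤ χ y := fun y => le_max_left _ _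
    have hχ1 : ∀ y, χ y ≤ 1 := fun y => max_le one_pos.le
      (by have := Metric.infDist_nonneg (s := Icc (0:ℝ) 1) (x := y); linarith)
    have hχIcc : ∀ y ∈ Icc (0:ℝ) 1, χ y = 1 := fun y hy => by
      rw [hχdef]
      simp [Metric.infDist_zero_of_mem hy]
    have hev : ∀ᶠ j in atTop, ∫ y, χ y ∂(birkhoffMeasure f p (n j)) = 1 := by
      filter_upwards [eventually_ge_atTop 1] with j hj
      rw [birkhoff_integral]
      have hnj : 1 ≤ n j := le_trans hj hn.le_apply
      have hall : ∀ k ∈ Finset.range (n j), χ (f^[k] p) = 1 :=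
        fun k _ => hχIcc _ (PiecewiseContData.orbit_mem hf hp k)
      rw [Finset.sum_congr rfl hall]
      have : (0:ℝ) < n j := by exact_mod_cast hnj
      simp only [Finset.sum_const, Finset.card_range, nsmul_eq_mul, mul_one]
      field_simp
    have h1 : ∫ y, χ y ∂μ = 1 :=
      tendsto_nhds_unique (hconv χ hχcont) (Tendsto.congr' (Filter.EventuallyEq.symm hev) tendsto_const_nhds)
    have hχint : Integrable χ μ := by
      refine Integrable.mono' (integrable_const 1) hχcont.aestronglyMeasurable ?_
      exact ae_of_all _ (fun y => by
        rw [Real.norm_eq_abs, abs_of_nonneg (hχ0 y)]; exact hχ1 y)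
    have hzero : ∫ y, (1 - χ y) ∂μ = 0 := by
      rw [integral_sub (integrable_const 1) hχint, integral_const]
      simp [h1]
    have hae := (integral_eq_zero_iff_of_nonneg
      (fun y => by show (0:ℝ) ≤ 1 - χ y; linarith [hχ1 y])
      ((integrable_const 1).sub hχint)).1 hzero
    filter_upwards [hae] with y hy
    have hy' : 1 - χ y = 0 := hy
    by_contra hyI
    have hpos : 0 < Metric.infDist y (Icc (0:ℝ) 1) :=
      (isClosed_Icc.notMem_iff_infDist_pos (nonempty_Icc.2 one_pos.le)).1 hyI
    have : χ y < 1 := max_lt one_pos (by linarith)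
    linarith
  -- a.e. strong measurability and integrability of φ ∘ f
  set Sg : Set ℝ := ⋃ i : Fin (P.d+1), Ioo (P.pt i.castSucc) (P.pt i.succ) with hSg
  have hSgopen : IsOpen Sg := isOpen_iUnion (fun i => isOpen_Ioo)
  have hSgcompl : μ Sgᶜ = 0 := by
    have hsub : Sgᶜ ⊆ (Icc (0:ℝ) 1)ᶜ ∪ P.D := by
      intro y hy
      by_contra hcon
      rw [mem_union] at hcon
      push_neg at hcon
      obtain ⟨h1, h2⟩ := hcon
      rw [mem_compl_iff, not_not] at h1
      obtain ⟨i, hi⟩ := P.cover h1 h2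
      exact hy (mem_iUnion.2 ⟨i, hi⟩)
    refine measure_mono_null hsub (measure_union_null ?_ hDnull)
    have := hIccae
    rwa [ae_iff] at this
  have hcontSg : ContinuousOn (fun y => φ (f y)) Sg := by
    intro y hy
    obtain ⟨i, hi⟩ := mem_iUnion.1 hy
    exact (hφ.continuousAt.comp ((P.cont i).continuousAt
      (Ioo_mem_nhds hi.1 hi.2))).continuousWithinAt
  have hfae : AEStronglyMeasurable (fun y => φ (f y)) μ := by
    have h1 : AEStronglyMeasurable (fun y => φ (f y)) (μ.restrict Sg) :=
      hcontSg.aestronglyMeasurable hSgopen.measurableSet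
    have h2 : ∀ᵐ y ∂μ, y ∈ Sg := by
      rw [ae_iff]
      exact hSgcompl
    rwa [Measure.restrict_eq_self_of_ae_mem h2] at h1
  have hintφf : Integrable (fun y => φ (f y)) μ := by
    refine Integrable.mono' (integrable_const C) hfae ?_
    filter_upwards [hIccae] with y hy
    rw [Real.norm_eq_abs]
    exact hCb _ (hf hy)
  -- main ε-argument
  rw [Metric.tendsto_nhds]
  intro ε hε
  set a : ℝ := ε / (16 * C) with ha
  have hapos : 0 < a := by positivity
  -- choose a small δ so that the δ-neighbourhood of D has small measure
  set U : ℝ → Set ℝ := fun δ => ⋃ i : Fin (P.d+2), ball (P.pt i) δ with hUdef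
  have hUopen : ∀ δ : ℝ, IsOpen (U δ) := fun δ => isOpen_iUnion (fun i => isOpen_ball)
  have hUmeas : ∀ δ : ℝ, MeasurableSet (U δ) := fun δ => (hUopen δ).measurableSet
  have hDU : ∀ δ : ℝ, 0 < δ → P.D ⊆ U δ := by
    rintro δ hδ y ⟨i, rfl⟩
    exact mem_iUnion.2 ⟨i, mem_ball_self hδ⟩
  have hInter : (⋂ m : ℕ, U (1/(m+1))) = P.D := by
    apply Subset.antisymm
    · intro y hy
      by_contra hyD
      have hdy : ∀ i : Fin (P.d+2), 0 < dist y (P.pt i) := fun i => by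
        rw [dist_pos]; exact fun h => hyD ⟨i, h.symm⟩
      set d0 := Finset.univ.inf' Finset.univ_nonempty
        (fun i : Fin (P.d+2) => dist y (P.pt i)) with hd0
      have hd0pos : 0 < d0 := by rw [hd0, Finset.lt_inf'_iff]; exact fun i _ => hdy i
      obtain ⟨m, hm⟩ := exists_nat_one_div_lt hd0pos
      obtain ⟨i, hi⟩ := mem_iUnion.1 (mem_iInter.1 hy m)
      rw [mem_ball] at hi
      have hle : d0 ≤ dist y (P.pt i) := Finset.inf'_le _ (Finset.mem_univ i)
      linarith
    · intro y hy
      exact mem_iInter.2 (fun m => hDU _ (by positivity) hy)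
  have htend : Tendsto (fun m : ℕ => μ (U (1/(m+1)))) atTop (𝓝 (μ P.D)) := by
    rw [← hInter]
    apply tendsto_measure_iInter_atTop (fun m => (hUmeas _).nullMeasurableSet) ?_
      ⟨0, measure_ne_top μ _⟩
    intro m m' hmm'
    apply iUnion_mono
    intro i
    apply ball_subset_ball
    apply one_div_le_one_div_of_le (by positivity)
    have : (m:ℝ) ≤ m' := by exact_mod_cast hmm'
    linarith
  rw [hDnull] at htend
  have hev0 : ∀ᶠ m : ℕ in atTop, μ (U (1/(m+1))) < ENNReal.ofReal a :=
    htend.eventually_lt_const (by simp [ENNReal.ofReal_pos, hapos])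
  obtain ⟨m, hm⟩ := hev0.exists
  set δ : ℝ := 1/(m+1) with hδdef
  have hδpos : 0 < δ := by positivity
  have hUa : (μ (U δ)).toReal < a := ENNReal.toReal_lt_of_lt_ofReal hm
  -- the cut-off function e
  have hDne : P.D.Nonempty := ⟨P.pt 0, ⟨0, rfl⟩⟩
  set e : ℝ → ℝ := fun y => max 0 (min 1 (2 - 2 * Metric.infDist y P.D / δ)) with hedef
  have he_cont : Continuous e :=
    continuous_const.max (continuous_const.min (continuous_const.sub
      ((continuous_const.mul (continuous_infDist_pt _)).div_const δ)))
  have he0 : ∀ y, 0 ≤ e y := fun y => le_max_left _ _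
  have he1 : ∀ y, e y ≤ 1 := fun y => max_le one_pos.le (min_le_left _ _)
  have he_one : ∀ y ∈ U (δ/2), e y = 1 := by
    intro y hy
    obtain ⟨i, hi⟩ := mem_iUnion.1 hy
    rw [mem_ball] at hi
    have h1 : Metric.infDist y P.D ≤ dist y (P.pt i) :=
      Metric.infDist_le_dist_of_mem ⟨i, rfl⟩
    have h2 : (1:ℝ) ≤ 2 - 2 * Metric.infDist y P.D / δ := by
      have h3 : 2 * Metric.infDist y P.D / δ < 1 := by
        rw [div_lt_iff₀ hδpos]
        nlinarith [Metric.infDist_nonneg (s := P.D) (x := y)]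
      linarith
    rw [hedef]
    simp only [min_eq_left h2, max_eq_right one_pos.le]
  have he_zero : ∀ y, y ∉ U δ → e y = 0 := by
    intro y hy
    have h1 : δ ≤ Metric.infDist y P.D := by
      by_contra hcon
      push_neg at hcon
      obtain ⟨z, hz, hzd⟩ := (Metric.infDist_lt_iff hDne).1 hcon
      obtain ⟨i, rfl⟩ := hz
      exact hy (mem_iUnion.2 ⟨i, mem_ball.2 hzd⟩)
    have h2 : 2 - 2 * Metric.infDist y P.D / δ ≤ 0 := by
      rw [sub_nonpos, le_div_iff₀ hδpos]
      linarith
    rw [hedef]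
    apply max_eq_left
    exact le_trans (min_le_right _ _) h2
  have he_int : Integrable e μ := by
    refine Integrable.mono' (integrable_const 1) he_cont.aestronglyMeasurable ?_
    exact ae_of_all _ (fun y => by rw [Real.norm_eq_abs, abs_of_nonneg (he0 y)]; exact he1 y)
  have heμ : ∫ y, e y ∂μ < a := by
    have h1 : ∫ y, e y ∂μ ≤ ∫ y, Set.indicator (U δ) (fun _ => (1:ℝ)) y ∂μ := by
      apply integral_mono he_int ((integrable_const (1:ℝ)).indicator (hUmeas δ))
      intro y
      by_cases hy : y ∈ U δ
      · rw [Set.indicator_of_mem hy]; exact he1 y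
      · rw [Set.indicator_of_notMem hy, he_zero y hy]
    have h2 : ∫ y, Set.indicator (U δ) (fun _ => (1:ℝ)) y ∂μ = (μ (U δ)).toReal := by
      rw [integral_indicator_const (1:ℝ) (hUmeas δ)]; simp; rfl
    rw [h2] at h1
    exact lt_of_le_of_lt h1 hUa
  -- the continuous substitute g for φ ∘ f
  set K : Set ℝ := Icc (0:ℝ) 1 \ U (δ/2) with hKdef
  have hKclosed : IsClosed K := by
    rw [hKdef, diff_eq]
    exact isClosed_Icc.inter (hUopen _).isClosed_compl
  have hKD : ∀ y ∈ K, y ∉ P.D := fun y hy hD => hy.2 (hDU (δ/2) (by positivity) hD)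
  have hKcont : ContinuousOn (fun y => φ (f y)) K := by
    intro y hy
    exact (hφ.continuousAt.comp (P.contAt hy.1 (hKD y hy))).continuousWithinAt
  obtain ⟨g0, hg0⟩ := ContinuousMap.exists_restrict_eq (Y := ℝ) hKclosed
    ⟨_, hKcont.restrict⟩
  have hg0K : ∀ y, ∀ hy : y ∈ K, g0 y = φ (f y) := by
    intro y hy
    have := congrFun (congrArg ContinuousMap.toFun hg0) ⟨y, hy⟩
    simpa using this
  set g : ℝ → ℝ := fun y => max (-C) (min C (g0 y)) with hgdef
  have hgcont : Continuous g := continuous_const.max (continuous_const.min g0.continuous)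
  have hgbd : ∀ y, |g y| ≤ C := by
    intro y
    rw [abs_le]
    constructor
    · exact le_max_left _ _
    · exact max_le (by linarith) (min_le_left _ _)
  have hgK : ∀ y ∈ K, g y = φ (f y) := by
    intro y hy
    have h1 : |φ (f y)| ≤ C := hCb _ (hf hy.1)
    rw [hgdef]
    simp only
    rw [hg0K y hy, min_eq_right (abs_le.1 h1).2, max_eq_right (abs_le.1 h1).1]
  have hinte_g : Integrable g μ := by
    refine Integrable.mono' (integrable_const C) hgcont.aestronglyMeasurable ?_
    exact ae_of_all _ (fun y => by rw [Real.norm_eq_abs]; exact hgbd y)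
  -- pointwise comparison on [0,1]
  have hptw : ∀ y ∈ Icc (0:ℝ) 1, |φ (f y) - g y| ≤ 2*C*(e y) := by
    intro y hy
    by_cases hyU : y ∈ U (δ/2)
    · rw [he_one y hyU, mul_one]
      have h1 : |φ (f y)| ≤ C := hCb _ (hf hy)
      have h2 : |g y| ≤ C := hgbd y
      have h3 : |φ (f y) - g y| ≤ |φ (f y)| + |g y| := by
        rw [sub_eq_add_neg]
        exact (abs_add_le _ _).trans (by rw [abs_neg])
      linarith
    · have hyK : y ∈ K := ⟨hy, hyU⟩
      rw [hgK y hyK, sub_self, abs_zero]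
      have := he0 y
      positivity
  -- estimate along the subsequence
  have hE1 : ∀ j, |(∫ y, φ (f y) ∂(birkhoffMeasure f p (n j))) -
      ∫ y, g y ∂(birkhoffMeasure f p (n j))|
      ≤ 2*C*∫ y, e y ∂(birkhoffMeasure f p (n j)) := by
    intro j
    rw [birkhoff_integral, birkhoff_integral, birkhoff_integral]
    rw [← mul_sub, ← Finset.sum_sub_distrib, abs_mul,
      abs_of_nonneg (show (0:ℝ) ≤ ((n j : ℝ))⁻¹ by positivity)]
    have hstep : |∑ k ∈ Finset.range (n j), (φ (f (f^[k] p)) - g (f^[k] p))|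
        ≤ ∑ k ∈ Finset.range (n j), 2*C*(e (f^[k] p)) := by
      refine le_trans (Finset.abs_sum_le_sum_abs _ _) ?_
      apply Finset.sum_le_sum
      intro k _
      exact hptw _ (PiecewiseContData.orbit_mem hf hp k)
    calc ((n j : ℝ))⁻¹ * |∑ k ∈ Finset.range (n j), (φ (f (f^[k] p)) - g (f^[k] p))|
        ≤ ((n j : ℝ))⁻¹ * ∑ k ∈ Finset.range (n j), 2*C*(e (f^[k] p)) :=
          mul_le_mul_of_nonneg_left hstep (by positivity)
      _ = 2*C*(((n j : ℝ))⁻¹ * ∑ k ∈ Finset.range (n j), e (f^[k] p)) := by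
          rw [← Finset.mul_sum]
          ring
  -- estimate for the limit measure
  have hE2 : |(∫ y, φ (f y) ∂μ) - ∫ y, g y ∂μ| ≤ 2*C*∫ y, e y ∂μ := by
    rw [← integral_sub hintφf hinte_g]
    have h1 : |∫ y, (φ (f y) - g y) ∂μ| ≤ ∫ y, |φ (f y) - g y| ∂μ := by
      simpa [Real.norm_eq_abs] using
        norm_integral_le_integral_norm (μ := μ) (fun y => φ (f y) - g y)
    refine h1.trans ?_
    have h2 : ∫ y, |φ (f y) - g y| ∂μ ≤ ∫ y, 2*C*(e y) ∂μ := by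
      apply integral_mono_ae ((hintφf.sub hinte_g).abs) (he_int.const_mul _)
      filter_upwards [hIccae] with y hy
      exact hptw y hy
    refine h2.trans ?_
    rw [integral_const_mul]
  -- put everything together
  have hev1 : ∀ᶠ j in atTop, ∫ y, e y ∂(birkhoffMeasure f p (n j)) < a :=
    (hconv e he_cont).eventually_lt_const heμ
  have hev2 : ∀ᶠ j in atTop,
      |(∫ y, g y ∂(birkhoffMeasure f p (n j))) - ∫ y, g y ∂μ| < ε/4 := by
    have := Metric.tendsto_nhds.1 (hconv g hgcont) (ε/4) (by positivity)
    filter_upwards [this] with j hj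
    rwa [Real.dist_eq] at hj
  filter_upwards [hev1, hev2] with j h1 h2
  rw [Real.dist_eq]
  set Ij := ∫ y, φ (f y) ∂(birkhoffMeasure f p (n j))
  set Gj := ∫ y, g y ∂(birkhoffMeasure f p (n j))
  set G := ∫ y, g y ∂μ
  set I := ∫ y, φ (f y) ∂μ
  have htri : |Ij - I| ≤ |Ij - Gj| + |Gj - G| + |G - I| := by
    have t1 := abs_sub_le Ij Gj I
    have t2 := abs_sub_le Gj G I
    linarith
  have hb1 : |Ij - Gj| ≤ 2*C*∫ y, e y ∂(birkhoffMeasure f p (n j)) := hE1 j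
  have hb1' : |Ij - Gj| < 2*C*a := lt_of_le_of_lt hb1 (by
    have h2C : (0:ℝ) < 2*C := by positivity
    exact mul_lt_mul_of_pos_left h1 h2C)
  have hb3 : |G - I| ≤ 2*C*a := by
    rw [abs_sub_comm]
    refine (hE2).trans ?_
    have h2C : (0:ℝ) ≤ 2*C := by positivity
    nlinarith [heμ]
  have : 2*C*a = ε/8 := by
    rw [ha]
    field_simp
    ring
  linarith
end
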